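/- arXiv:2305.01187 — 2 statements merged into one kernel-verified Lean document; each statement's English description precedes it below -/
import Mathlib

section
/- Let A be a commutative algebra object in a braided monoidal category C that contains the monoidal unit 1 as a direct summand, A ≅ 1 ⊕ A'. If a short exact sequence 0 → X → Y → Z → 0 in C becomes split after applying the induction functor F_A : C → Rep A (given on objects by M ↦ (A ⊗ M, μ ⊗ Id_M)), then the original sequence splits in C. -/
open CategoryTheory MonoidalCategory Limits

section Induction

variable {C : Type*} [Category C] [MonoidalCategory C]

/-- The induced (free) module `A ⊗ M` over a monoid object `A` (the induction functor
on objects): `F_A(M) = (A ⊗ M, μ ⊗ Id_M)`. -/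
@[simps]
def inducedMod (A : Mon C) (M : C) : Mod C A.X where
  X := A.X ⊗ M
  mod :=
  { smul := (α_ A.X A.X M).inv ≫ (MonObj.mul (X := A.X) ▷ M)
    one_smul := by
      change MonObj.one ▷ (A.X ⊗ M) ≫ (α_ A.X A.X M).inv ≫ (MonObj.mul (X := A.X) ▷ M) =
        (λ_ (A.X ⊗ M)).hom
      rw [associator_inv_naturality_left_assoc, ← comp_whiskerRight, MonObj.one_mul]
      monoidal
    mul_smul := by
      change _ ▷ _ ≫ _ = (α_ _ _ _).hom ≫ _ ◁ _ ≫ _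
      rw [associator_inv_naturality_left_assoc, ← comp_whiskerRight, MonObj.mul_assoc]
      simp only [comp_whiskerRight, MonoidalCategory.whiskerLeft_comp, Category.assoc,
        associator_inv_naturality_middle_assoc]
      monoidal }

/-- The induction functor on morphisms: `F_A(f) = Id_A ⊗ f`. -/
@[simps]
def inducedHom (A : Mon C) {M N : C} (f : M ⟶ N) : inducedMod A M ⟶ inducedMod A N where
  hom := A.X ◁ f
  isModHom := ⟨by
    change ((α_ A.X A.X M).inv ≫ (MonObj.mul (X := A.X) ▷ M)) ≫ A.X ◁ f =
      A.X ◁ (A.X ◁ f) ≫ (α_ A.X A.X N).inv ≫ (MonObj.mul (X := A.X) ▷ N)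
    simp only [Category.assoc, ← whisker_exchange]
    simp⟩

end Induction

/-- If a short exact sequence `0 → X → Y → Z → 0` becomes split after applying the
induction functor `F_A` for a commutative algebra object `A` containing the monoidal
unit as a direct summand, then the original sequence splits. -/
theorem induction_strong_exact
    {C : Type*} [Category C] [MonoidalCategory C] [BraidedCategory C] [Abelian C]
    [MonoidalPreadditive C]
    [∀ X : C, PreservesFiniteLimits (tensorLeft X)]
    [∀ X : C, PreservesFiniteColimits (tensorLeft X)]
    (A : CommMon C) (A' : C) (hA : Nonempty (A.X ≅ 𝟙_ C ⊞ A'))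
    (S : ShortComplex C) (hS : S.ShortExact)
    (hsplit : ∃ h : inducedMod A.toMon S.X₂ ⟶ inducedMod A.toMon S.X₁,
      inducedHom A.toMon S.f ≫ h = 𝟙 (inducedMod A.toMon S.X₁)) :
    ∃ r : S.X₂ ⟶ S.X₁, S.f ≫ r = 𝟙 S.X₁ := by
  obtain ⟨h, hh⟩ := hsplit
  obtain ⟨e⟩ := hA
  let g : A.X ⊗ S.X₂ ⟶ A.X ⊗ S.X₁ := h.hom
  have hcomp : (A.X ◁ S.f) ≫ g = 𝟙 (A.X ⊗ S.X₁) := congrArg (fun g => g.hom) hh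
  set i : 𝟙_ C ⟶ A.X := biprod.inl ≫ e.inv
  set p : A.X ⟶ 𝟙_ C := e.hom ≫ biprod.fst
  have hip : i ≫ p = 𝟙 (𝟙_ C) := by simp [i, p]
  refine ⟨(λ_ S.X₂).inv ≫ (i ▷ S.X₂) ≫ g ≫ (p ▷ S.X₁) ≫ (λ_ S.X₁).hom, ?_⟩
  rw [← Category.assoc, leftUnitor_inv_naturality]
  have exch : (𝟙_ C ◁ S.f) ≫ (i ▷ S.X₂) = (i ▷ S.X₁) ≫ (A.X ◁ S.f) :=
    whisker_exchange i S.f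
  slice_lhs 2 3 => rw [exch]
  slice_lhs 3 4 => rw [hcomp]
  simp only [Category.id_comp]
  slice_lhs 2 3 => rw [← comp_whiskerRight, hip]
  simp
end

section
/- Let C be a locally finite abelian category, M an object of C, and k ≥ 1. If f, g : soc_k(M) → M are any two monomorphisms, then Im(f) = Im(g) as subobjects of M, and consequently Coker(f) ≅ Coker(g). -/
open CategoryTheory Limits

universe v v'

section Loewy

variable {C : Type*} [Category.{v} C] [Abelian C] [WellPowered.{v} C]

/-- An object is semisimple if every monomorphism into it splits. -/
def IsSemisimple (X : C) : Prop :=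
  ∀ (Y : C) (i : Y ⟶ X), Mono i → ∃ r : X ⟶ Y, i ≫ r = 𝟙 Y

/-- A subobject is the socle if it is the largest semisimple subobject. -/
def IsSocle {X : C} (S : Subobject X) : Prop :=
  IsSemisimple (S : C) ∧ ∀ T : Subobject X, IsSemisimple (T : C) → T ≤ S

/-- A subobject is the radical if it is the smallest subobject with semisimple quotient. -/
def IsRadicalSubobject {X : C} (R : Subobject X) : Prop :=
  IsSemisimple (cokernel R.arrow) ∧ ∀ T : Subobject X, IsSemisimple (cokernel T.arrow) → R ≤ T

/-- The socle series of `X`, relative to a choice `soc` of socle for every object: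
`soc_0(X) = 0` and `soc_{k+1}(X)` is the preimage in `X` of the socle of `X/soc_k(X)`. -/
noncomputable def socSeries (soc : ∀ X : C, Subobject X) (X : C) : ℕ → Subobject X
  | 0 => ⊥
  | k + 1 => socSeries soc X k ⊔
      (Subobject.pullback (cokernel.π (socSeries soc X k).arrow)).obj
        (soc (cokernel (socSeries soc X k).arrow))

lemma socSeries_monotone (soc : ∀ X : C, Subobject X) (X : C) :
    Monotone (socSeries soc X) :=
  monotone_nat_of_le_succ fun _ => le_sup_left

/-- The Loewy length of `X`: the length of its socle series. -/
noncomputable def socLoewyLength (soc : ∀ X : C, Subobject X) (X : C) : ℕ :=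
  sInf {n | socSeries soc X n = ⊤}

/-- The radical series of `X`, relative to a choice `rad` of radical for every object:
`rad_0(X) = X` and `rad_{k+1}(X)` is the radical of `rad_k(X)`, viewed inside `X`. -/
noncomputable def radSeries (rad : ∀ X : C, Subobject X) (X : C) : ℕ → Subobject X
  | 0 => ⊤
  | k + 1 => (Subobject.map (radSeries rad X k).arrow).obj
      (rad ((radSeries rad X k : C)))

/-- The Loewy length of `X`: the length of its radical series. -/
noncomputable def radLoewyLength (rad : ∀ X : C, Subobject X) (X : C) : ℕ :=
  sInf {n | radSeries rad X n = ⊥}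

variable {D : Type*} [Category.{v'} D] [Abelian D] [WellPowered.{v'} D]

/-- A functor preserves socle filtrations if Loewy lengths agree and it sends each term of
the socle series of `X` to the corresponding term of the socle series of `F(X)`. -/
def PreservesSocleFiltrations (F : C ⥤ D) (socC : ∀ X : C, Subobject X)
    (socD : ∀ Y : D, Subobject Y) : Prop :=
  ∀ X : C, socLoewyLength socC X = socLoewyLength socD (F.obj X) ∧
    ∀ k : ℕ, Nonempty (F.obj ((socSeries socC X k : C)) ≅ ((socSeries socD (F.obj X) k : D)))

/-- A functor preserves radical filtrations if Loewy lengths agree and it sends each term of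
the radical series of `X` to the corresponding term of the radical series of `F(X)`. -/
def PreservesRadicalFiltrations (F : C ⥤ D) (radC : ∀ X : C, Subobject X)
    (radD : ∀ Y : D, Subobject Y) : Prop :=
  ∀ X : C, radLoewyLength radC X = radLoewyLength radD (F.obj X) ∧
    ∀ k : ℕ, Nonempty (F.obj ((radSeries radC X k : C)) ≅ ((radSeries radD (F.obj X) k : D)))

end Loewy

section AuxProof

open CategoryTheory.Subobject

variable {C : Type*} [Category.{v} C] [Abelian C] [WellPowered.{v} C]

lemma aux_isSemisimple_of_mono {X Y : C} (i : Y ⟶ X) [Mono i] (hX : IsSemisimple X) :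
    IsSemisimple Y := by
  intro Z j hj
  haveI := hj
  obtain ⟨r, hr⟩ := hX Z (j ≫ i) inferInstance
  exact ⟨i ≫ r, by rw [← Category.assoc]; exact hr⟩

lemma aux_isSemisimple_of_epi {X Q : C} (e : X ⟶ Q) [Epi e] (hX : IsSemisimple X) :
    IsSemisimple Q := by
  obtain ⟨r, hr⟩ := hX _ (kernel.ι e) inferInstance
  have hκ : kernel.ι e ≫ (𝟙 X - r ≫ kernel.ι e) = 0 := by
    simp [Preadditive.comp_sub, reassoc_of% hr]
  set t : Q ⟶ X := Abelian.epiDesc e (𝟙 X - r ≫ kernel.ι e) hκ with ht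
  have het : e ≫ t = 𝟙 X - r ≫ kernel.ι e := Abelian.comp_epiDesc _ _ _
  have hte : t ≫ e = 𝟙 Q := by
    rw [← cancel_epi e, ← Category.assoc, het]
    simp [Preadditive.sub_comp, kernel.condition]
  haveI : IsSplitMono t := IsSplitMono.mk' ⟨e, hte⟩
  intro Z j hj
  haveI := hj
  obtain ⟨r', hr'⟩ := hX Z (j ≫ t) inferInstance
  exact ⟨t ≫ r', by rw [← Category.assoc]; exact hr'⟩

lemma aux_pullback_obj_mk {W Y Z : C} (φ : Y ⟶ Z) (g : W ⟶ Z) [Mono g] :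
    (Subobject.pullback φ).obj (Subobject.mk g) = Subobject.mk (pullback.snd g φ) :=
  Quotient.sound ⟨MonoOver.isoMk (Iso.refl _) (by simp)⟩

lemma aux_map_obj_mk {W X Y : C} (f : X ⟶ Y) [Mono f] (g : W ⟶ X) [Mono g] :
    (Subobject.map f).obj (Subobject.mk g) = Subobject.mk (g ≫ f) :=
  Quotient.sound ⟨MonoOver.isoMk (Iso.refl _) (by simp)⟩

lemma aux_map_obj_eq {X Y : C} (f : X ⟶ Y) [Mono f] (U : Subobject X) :
    (Subobject.map f).obj U = Subobject.mk (U.arrow ≫ f) := by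
  conv_lhs => rw [← mk_arrow U]
  rw [aux_map_obj_mk]

lemma aux_map_le_iff {X Y : C} (f : X ⟶ Y) [Mono f] (A : Subobject X) (B : Subobject Y) :
    (Subobject.map f).obj A ≤ B ↔ A ≤ (Subobject.pullback f).obj B :=
  ⟨fun h => leOfHom ((mapPullbackAdj f).homEquiv A B (homOfLE h)),
   fun h => leOfHom (((mapPullbackAdj f).homEquiv A B).symm (homOfLE h))⟩

lemma aux_factors_of_eq {Z : C} (U : Subobject Z) {A : C} {h : A ⟶ Z} (u : A ⟶ (U : C))
    (hu : u ≫ U.arrow = h) : U.Factors h := hu ▸ factors_comp_arrow u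

/-- The canonical factorisation of `(pullback φ).obj U ⟶ Y ⟶ Z` through `U`. -/
lemma aux_pullback_factors {Y Z : C} (φ : Y ⟶ Z) (U : Subobject Z) :
    U.Factors (((Subobject.pullback φ).obj U).arrow ≫ φ) := by
  have hK : (Subobject.pullback φ).obj U = Subobject.mk (pullback.snd U.arrow φ) := by
    conv_lhs => rw [← mk_arrow U]
    rw [aux_pullback_obj_mk]
  rw [hK]
  refine aux_factors_of_eq U ((underlyingIso _).hom ≫ pullback.fst U.arrow φ) ?_
  rw [Category.assoc, pullback.condition, ← Category.assoc, underlyingIso_hom_comp_eq_mk]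

lemma aux_le_pullback_of_factors {Y Z : C} (φ : Y ⟶ Z) {U : Subobject Z} {S : Subobject Y}
    (h : U.Factors (S.arrow ≫ φ)) : S ≤ (Subobject.pullback φ).obj U := by
  have hK : (Subobject.pullback φ).obj U = Subobject.mk (pullback.snd U.arrow φ) := by
    conv_lhs => rw [← mk_arrow U]
    rw [aux_pullback_obj_mk]
  rw [hK]
  exact le_mk_of_comm
    (pullback.lift (U.factorThru _ h) S.arrow (by rw [factorThru_arrow]))
    (pullback.lift_snd _ _ _)

lemma aux_le_map_pullback_of_le {X Y : C} (f : X ⟶ Y) [Mono f] {U : Subobject Y}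
    (h : U ≤ Subobject.mk f) :
    U ≤ (Subobject.map f).obj ((Subobject.pullback f).obj U) := by
  let j : (U : C) ⟶ X := ofLEMk U f h
  have hU : (Subobject.map f).obj (Subobject.mk j) = U := by
    rw [aux_map_obj_mk]
    exact (eq_mk_of_comm _ (Iso.refl _) (by simp [j])).symm
  calc U = (Subobject.map f).obj (Subobject.mk j) := hU.symm
    _ ≤ (Subobject.map f).obj ((Subobject.pullback f).obj U) := by
        apply (Subobject.map f).monotone
        rw [← aux_map_le_iff, hU]

lemma aux_semisimple_sub {X : C} {U V : Subobject X} (h : U ≤ V)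
    (hV : IsSemisimple (V : C)) : IsSemisimple (U : C) :=
  aux_isSemisimple_of_mono (ofLE U V h) hV

lemma aux_semisimple_map {X Y : C} (f : X ⟶ Y) [Mono f] {W : Subobject X}
    (h : IsSemisimple (((Subobject.map f).obj W : C))) : IsSemisimple (W : C) := by
  rw [aux_map_obj_eq] at h
  exact aux_isSemisimple_of_mono (underlyingIso (W.arrow ≫ f)).inv h

/-- The image of a semisimple subobject lies in the socle. -/
lemma aux_le_pullback_soc (soc : ∀ X : C, Subobject X) (hsoc : ∀ X : C, IsSocle (soc X))
    {Y Z : C} (φ : Y ⟶ Z) {S : Subobject Y} (hS : IsSemisimple (S : C)) :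
    S ≤ (Subobject.pullback φ).obj (soc Z) := by
  set h : (S : C) ⟶ Z := S.arrow ≫ φ with hh
  set I : Subobject Z := Subobject.mk (Limits.image.ι h) with hI
  have hIsemi : IsSemisimple (I : C) := by
    apply aux_isSemisimple_of_mono (underlyingIso (Limits.image.ι h)).hom
    exact aux_isSemisimple_of_epi (Limits.factorThruImage h) hS
  have hIle : I ≤ soc Z := (hsoc Z).2 I hIsemi
  have hfac : I.Factors (S.arrow ≫ φ) := by
    refine aux_factors_of_eq I (Limits.factorThruImage h ≫ (underlyingIso _).inv) ?_
    rw [Category.assoc, underlyingIso_arrow, Limits.image.fac]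
  exact (aux_le_pullback_of_factors φ hfac).trans ((Subobject.pullback φ).monotone hIle)

/-- The preimage of a semisimple subobject under a mono lies in the socle. -/
lemma aux_pullback_le_soc (soc : ∀ X : C, Subobject X) (hsoc : ∀ X : C, IsSocle (soc X))
    {Y Z : C} (ψ : Y ⟶ Z) [Mono ψ] {S : Subobject Z} (hS : IsSemisimple (S : C)) :
    (Subobject.pullback ψ).obj S ≤ soc Y := by
  set W : Subobject Y := (Subobject.pullback ψ).obj S with hW
  have h1 : (Subobject.map ψ).obj W ≤ S := (aux_map_le_iff ψ W S).2 le_rfl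
  have h2 : IsSemisimple (((Subobject.map ψ).obj W : C)) := aux_semisimple_sub h1 hS
  exact (hsoc Y).2 W (aux_semisimple_map ψ h2)

lemma aux_map_socSeries_le (soc : ∀ X : C, Subobject X) (hsoc : ∀ X : C, IsSocle (soc X))
    {X M : C} (f : X ⟶ M) [Mono f] :
    ∀ n : ℕ, (Subobject.map f).obj (socSeries soc X n) ≤ socSeries soc M n := by
  intro n
  induction n with
  | zero => simp only [socSeries, Subobject.map_bot, le_refl]
  | succ n ih =>
    set A := socSeries soc X n with hA
    set B := socSeries soc M n with hB
    have hfacB : B.Factors (A.arrow ≫ f) := by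
      have : Subobject.mk (A.arrow ≫ f) ≤ B := by rw [← aux_map_obj_eq]; exact ih
      exact factors_of_le _ this (mk_factors_self _)
    have w : A.arrow ≫ f ≫ cokernel.π B.arrow = 0 := by
      rw [← Category.assoc, ← factorThru_arrow _ _ hfacB, Category.assoc,
        cokernel.condition, comp_zero]
    set φ : cokernel A.arrow ⟶ cokernel B.arrow :=
      cokernel.desc A.arrow (f ≫ cokernel.π B.arrow) w with hφ
    have comm : cokernel.π A.arrow ≫ φ = f ≫ cokernel.π B.arrow := cokernel.π_desc _ _ _
    show (Subobject.map f).obj (A ⊔ _) ≤ B ⊔ _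
    rw [aux_map_le_iff]
    apply sup_le
    · rw [← aux_map_le_iff]
      exact ih.trans le_sup_left
    · refine le_trans ?_ ((Subobject.pullback f).monotone
        (le_sup_right : (Subobject.pullback (cokernel.π B.arrow)).obj
          (soc (cokernel B.arrow)) ≤ _))
      rw [← pullback_comp, ← comm, pullback_comp]
      exact (Subobject.pullback (cokernel.π A.arrow)).monotone
        (aux_le_pullback_soc soc hsoc φ (hsoc (cokernel A.arrow)).1)

open CategoryTheory.Abelian.Pseudoelement in
lemma aux_mono_cokernel_desc {T M : C} (i : T ⟶ M) [Mono i] (B : Subobject T)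
    (A : Subobject M) (hA : (Subobject.map i).obj B = A)
    (w : B.arrow ≫ i ≫ cokernel.π A.arrow = 0) :
    Mono (cokernel.desc B.arrow (i ≫ cokernel.π A.arrow) w) := by
  set ψ := cokernel.desc B.arrow (i ≫ cokernel.π A.arrow) w with hψ
  apply mono_of_zero_of_map_zero
  intro a ha
  obtain ⟨s, rfl⟩ := pseudo_surjective_of_epi (cokernel.π B.arrow) a
  have h1 : pseudoApply (cokernel.π A.arrow) (pseudoApply i s) = 0 := by
    rw [← Abelian.Pseudoelement.comp_apply,
      ← cokernel.π_desc B.arrow (i ≫ cokernel.π A.arrow) w,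
      Abelian.Pseudoelement.comp_apply]
    exact ha
  obtain ⟨a', ha'⟩ :=
    pseudo_exact_of_exact (CategoryTheory.ShortComplex.exact_cokernel A.arrow)
      (pseudoApply i s) h1
  have hmk : Subobject.mk (B.arrow ≫ i) = A := by rw [← aux_map_obj_eq]; exact hA
  set v : (A : C) ⟶ (B : C) :=
    ofLE A (Subobject.mk (B.arrow ≫ i)) hmk.ge ≫ (underlyingIso (B.arrow ≫ i)).hom with hv
  have hvBA : v ≫ B.arrow ≫ i = A.arrow := by
    rw [hv, Category.assoc, underlyingIso_hom_comp_eq_mk, ofLE_arrow]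
  have key : pseudoApply i (pseudoApply (v ≫ B.arrow) a') = pseudoApply i s := by
    rw [← Abelian.Pseudoelement.comp_apply, Category.assoc, hvBA]
    exact ha'
  have hs : pseudoApply (v ≫ B.arrow) a' = s := pseudo_injective_of_mono i key
  rw [← hs, ← Abelian.Pseudoelement.comp_apply]
  have hz : (v ≫ B.arrow) ≫ cokernel.π B.arrow = 0 := by
    rw [Category.assoc, cokernel.condition, comp_zero]
  rw [hz]
  exact zero_apply _ _

lemma aux_socSeries_le_map (soc : ∀ X : C, Subobject X) (hsoc : ∀ X : C, IsSocle (soc X))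
    {M : C} (T : Subobject M) :
    ∀ n : ℕ, socSeries soc M n ≤ T →
      socSeries soc M n ≤ (Subobject.map T.arrow).obj (socSeries soc (T : C) n) := by
  intro n
  induction n with
  | zero => intro _; simp only [socSeries]; exact bot_le
  | succ n ih =>
    intro hn1
    have hle : socSeries soc M n ≤ socSeries soc M (n + 1) :=
      socSeries_monotone soc M (Nat.le_succ n)
    have hn : socSeries soc M n ≤ T := hle.trans hn1
    set i := T.arrow with hi
    set A := socSeries soc M n with hA
    set B := socSeries soc (T : C) n with hB
    have hAB : (Subobject.map i).obj B = A :=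
      le_antisymm (aux_map_socSeries_le soc hsoc i n) (ih hn)
    have hfacA : A.Factors (B.arrow ≫ i) := by
      have : Subobject.mk (B.arrow ≫ i) ≤ A := by rw [← aux_map_obj_eq]; exact le_of_eq hAB
      exact factors_of_le _ this (mk_factors_self _)
    have w2 : B.arrow ≫ i ≫ cokernel.π A.arrow = 0 := by
      rw [← Category.assoc, ← factorThru_arrow _ _ hfacA, Category.assoc,
        cokernel.condition, comp_zero]
    set ψ : cokernel B.arrow ⟶ cokernel A.arrow :=
      cokernel.desc B.arrow (i ≫ cokernel.π A.arrow) w2 with hψ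
    haveI : Mono ψ := aux_mono_cokernel_desc i B A hAB w2
    have comm2 : cokernel.π B.arrow ≫ ψ = i ≫ cokernel.π A.arrow := cokernel.π_desc _ _ _
    show A ⊔ _ ≤ (Subobject.map i).obj (B ⊔ _)
    apply sup_le
    · rw [← hAB]
      exact (Subobject.map i).monotone le_sup_left
    · set PA := (Subobject.pullback (cokernel.π A.arrow)).obj (soc (cokernel A.arrow)) with hPA
      have hPT : PA ≤ Subobject.mk i := by
        have hmkT : Subobject.mk i = T := mk_arrow T
        rw [hmkT]
        exact (le_sup_right.trans hn1 : PA ≤ T)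
      refine (aux_le_map_pullback_of_le i hPT).trans ((Subobject.map i).monotone ?_)
      refine le_trans ?_ (le_sup_right :
        (Subobject.pullback (cokernel.π B.arrow)).obj (soc (cokernel B.arrow)) ≤ _)
      rw [hPA, ← pullback_comp, ← comm2, pullback_comp]
      exact (Subobject.pullback (cokernel.π B.arrow)).monotone
        (aux_pullback_le_soc soc hsoc ψ (hsoc (cokernel A.arrow)).1)

variable {k : Type*} [Field k] [CategoryTheory.Linear k C]
  [∀ X Y : C, FiniteDimensional k (X ⟶ Y)]

include k

lemma aux_isIso_endo_of_mono {B : C} (h : B ⟶ B) [Mono h] : IsIso h := by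
  have hinj : Function.Injective (Linear.rightComp k B h) := by
    intro g₁ g₂ e
    exact (cancel_mono h).1 e
  obtain ⟨r, hr⟩ := (LinearMap.injective_iff_surjective.1 hinj) (𝟙 B)
  haveI : IsSplitEpi h := IsSplitEpi.mk' ⟨r, hr⟩
  exact isIso_of_mono_of_isSplitEpi h

lemma aux_subobject_eq_of_le_of_iso {M : C} {A B : Subobject M} (hle : A ≤ B)
    (e : (A : C) ≅ (B : C)) : A = B := by
  set h : (B : C) ⟶ (B : C) := e.inv ≫ ofLE A B hle with hh
  haveI : Mono h := mono_comp _ _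
  haveI : IsIso h := aux_isIso_endo_of_mono (k := k) h
  have : ofLE A B hle = e.hom ≫ h := by rw [hh, ← Category.assoc, e.hom_inv_id, Category.id_comp]
  haveI : IsIso (ofLE A B hle) := by rw [this]; infer_instance
  refine le_antisymm hle (le_of_comm (inv (ofLE A B hle)) ?_)
  rw [IsIso.inv_comp_eq, ofLE_arrow]

end AuxProof

/-- The terms of the socle series are uniquely embedded: any two monomorphisms
`soc_k(M) → M` have the same image, and hence isomorphic cokernels. -/
theorem socSeries_uniquely_embedded
    {k : Type*} [Field k] {C : Type*} [Category.{v} C] [Abelian C] [WellPowered.{v} C]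
    [CategoryTheory.Linear k C] [∀ X Y : C, FiniteDimensional k (X ⟶ Y)]
    [∀ X : C, IsNoetherianObject X] [∀ X : C, IsArtinianObject X]
    (soc : ∀ X : C, Subobject X) (hsoc : ∀ X : C, IsSocle (soc X))
    (M : C) (n : ℕ) (hn : 1 ≤ n)
    (f g : ((socSeries soc M n : C)) ⟶ M) (hf : Mono f) (hg : Mono g) :
    Subobject.mk f = Subobject.mk g ∧ Nonempty (cokernel f ≅ cokernel g) := by
  haveI := hf; haveI := hg
  have htop : socSeries soc ((socSeries soc M n : C)) n = ⊤ := by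
    have h1 : socSeries soc M n ≤ (Subobject.map (socSeries soc M n).arrow).obj
        (socSeries soc ((socSeries soc M n : C)) n) :=
      aux_socSeries_le_map soc hsoc (socSeries soc M n) n le_rfl
    have h2 : (Subobject.map (socSeries soc M n).arrow).obj
        (socSeries soc ((socSeries soc M n : C)) n) ≤ socSeries soc M n := by
      have := (Subobject.map (socSeries soc M n).arrow).monotone
        (le_top (a := socSeries soc ((socSeries soc M n : C)) n))
      rwa [Subobject.map_top, Subobject.mk_arrow] at this
    have heq : (Subobject.map (socSeries soc M n).arrow).obj
          (socSeries soc ((socSeries soc M n : C)) n)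
        = (Subobject.map (socSeries soc M n).arrow).obj ⊤ := by
      rw [Subobject.map_top, Subobject.mk_arrow]; exact le_antisymm h2 h1
    calc socSeries soc ((socSeries soc M n : C)) n
        = (Subobject.pullback (socSeries soc M n).arrow).obj
            ((Subobject.map (socSeries soc M n).arrow).obj
              (socSeries soc ((socSeries soc M n : C)) n)) :=
          (Subobject.pullback_map_self _ _).symm
      _ = (Subobject.pullback (socSeries soc M n).arrow).obj
            ((Subobject.map (socSeries soc M n).arrow).obj ⊤) := by rw [heq]
      _ = ⊤ := Subobject.pullback_map_self _ _
  have keyf : Subobject.mk f = socSeries soc M n := by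
    have hle : Subobject.mk f ≤ socSeries soc M n := by
      have := aux_map_socSeries_le soc hsoc f n
      rwa [htop, Subobject.map_top] at this
    exact aux_subobject_eq_of_le_of_iso (k := k) hle (Subobject.underlyingIso f)
  have keyg : Subobject.mk g = socSeries soc M n := by
    have hle : Subobject.mk g ≤ socSeries soc M n := by
      have := aux_map_socSeries_le soc hsoc g n
      rwa [htop, Subobject.map_top] at this
    exact aux_subobject_eq_of_le_of_iso (k := k) hle (Subobject.underlyingIso g)
  have hfg : Subobject.mk f = Subobject.mk g := by rw [keyf, keyg]
  refine ⟨hfg, ?_⟩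
  have e1 : cokernel ((Subobject.mk f).arrow) ≅ cokernel f := by
    rw [← Subobject.underlyingIso_hom_comp_eq_mk f]
    exact cokernelEpiComp _ _
  have e2 : cokernel ((Subobject.mk g).arrow) ≅ cokernel g := by
    rw [← Subobject.underlyingIso_hom_comp_eq_mk g]
    exact cokernelEpiComp _ _
  exact ⟨e1.symm ≪≫ eqToIso (by rw [hfg]) ≪≫ e2⟩
end
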